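/- Let u, v, x ∈ ℝⁿ be affinely independent points. Let y, z ∈ ℝⁿ be such that y, u, v, z are collinear and occur in this order with y ≠ u, u ≠ v, v ≠ z; let p', q' ∈ ℝⁿ be such that p', u, x, q' are collinear and occur in this order with p' ≠ u and u ≠ x; let i ∈ ℝⁿ be such that i, v, x are collinear and occur in this order with i ≠ v and v ≠ x; and suppose y, i, p' are collinear. Let d = (|y−z|·|u−v|)/(|y−u|·|v−z|) and assume d·|p'−q'| ≤ (1/2)·|x−u|. Then |v−i| ≤ 2·(|x−v|/|x−u|)·|u−p'|. -/

import Mathlib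

set_option maxHeartbeats 1000000

lemma wbtw_aux {n : ℕ} {P Q R : EuclideanSpace ℝ (Fin n)} (h : Wbtw ℝ P Q R)
    (hPQ : P ≠ Q) : ∃ e : ℝ, 0 ≤ e ∧ R - Q = e • (Q - P) := by
  obtain ⟨t, ht, hQ⟩ := h
  rw [AffineMap.lineMap_apply] at hQ
  have hQ' : Q = t • (R - P) + P := by
    rw [← hQ]; simp [vsub_eq_sub, vadd_eq_add]
  have ht0 : t ≠ 0 := by
    rintro rfl; simp at hQ'; exact hPQ hQ'.symm
  have htpos : 0 < t := lt_of_le_of_ne ht.1 (Ne.symm ht0)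
  refine ⟨(1 - t)/t, div_nonneg (by linarith [ht.2]) htpos.le, ?_⟩
  have hQP : Q - P = t • (R - P) := by rw [hQ']; abel
  rw [hQP, smul_smul, div_mul_cancel₀ _ ht0, hQ', sub_smul, one_smul]
  abel

/-- eq. v.i.bound, the Menelaus-based bound in the proof of the total
variation lemma.  With `u, v, x` affinely independent, `y, u, v, z` collinear in this
order, `p', u, x, q'` collinear in this order, `i, v, x` collinear in this order,
`y, i, p'` collinear, and `d·|p'−q'| ≤ (1/2)·|x−u|` where
`d = |y−z|·|u−v|/(|y−u|·|v−z|)`, one has `|v−i| ≤ 2·(|x−v|/|x−u|)·|u−p'|`. -/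
theorem stmt_8 (n : ℕ) (u v x y z p' q' i : EuclideanSpace ℝ (Fin n))
    (hindep : AffineIndependent ℝ ![u, v, x])
    (hyuv : Wbtw ℝ y u v) (huvz : Wbtw ℝ u v z)
    (hyu : y ≠ u) (huv : u ≠ v) (hvz : v ≠ z)
    (hpux : Wbtw ℝ p' u x) (huxq : Wbtw ℝ u x q')
    (hpu : p' ≠ u) (hux : u ≠ x)
    (hivx : Wbtw ℝ i v x) (hiv : i ≠ v) (hvx : v ≠ x)
    (hcol : Collinear ℝ ({y, i, p'} : Set (EuclideanSpace ℝ (Fin n))))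
    (hd : (dist y z * dist u v / (dist y u * dist v z)) * dist p' q' ≤
      (1 / 2) * dist x u) :
    dist v i ≤ 2 * (dist x v / dist x u) * dist u p' := by
  obtain ⟨a, ha0, ha⟩ := wbtw_aux hyuv.symm huv.symm
  obtain ⟨c, hc0, hc⟩ := wbtw_aux huvz huv
  obtain ⟨b, hb0, hb⟩ := wbtw_aux hpux.symm hux.symm
  obtain ⟨e, he0, he⟩ := wbtw_aux huxq hux
  obtain ⟨s, hs0, hs⟩ := wbtw_aux hivx.symm hvx.symm
  have ha1 : a ≠ 0 := fun h0 => hyu (by rw [h0, zero_smul] at ha; exact sub_eq_zero.1 ha)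
  have hc1 : c ≠ 0 := fun h0 => hvz (by rw [h0, zero_smul] at hc; exact (sub_eq_zero.1 hc).symm)
  have hb1 : b ≠ 0 := fun h0 => hpu (by rw [h0, zero_smul] at hb; exact sub_eq_zero.1 hb)
  have hs1 : s ≠ 0 := fun h0 => hiv (by rw [h0, zero_smul] at hs; exact sub_eq_zero.1 hs)
  have hapos : 0 < a := lt_of_le_of_ne ha0 (Ne.symm ha1)
  have hcpos : 0 < c := lt_of_le_of_ne hc0 (Ne.symm hc1)
  have hbpos : 0 < b := lt_of_le_of_ne hb0 (Ne.symm hb1)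
  have hspos : 0 < s := lt_of_le_of_ne hs0 (Ne.symm hs1)
  -- linear independence of v - u, x - u
  have hV : ∀ α β : ℝ, α • (v - u) + β • (x - u) = 0 → α = 0 ∧ β = 0 := by
    intro α β hab
    by_contra hcon
    rw [affineIndependent_iff_not_collinear_set] at hindep
    apply hindep
    rcases not_and_or.1 hcon with hα | hβ
    · apply (collinear_iff_of_mem (Set.mem_insert u {v, x})).2
      refine ⟨x - u, fun p hp => ?_⟩
      simp only [Set.mem_insert_iff, Set.mem_singleton_iff] at hp
      rcases hp with rfl | rfl | rfl
      · exact ⟨0, by simp⟩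
      · refine ⟨-β/α, ?_⟩
        have h2 : α • (p - u) = α • ((-β/α) • (x - u)) := by
          rw [smul_smul, show α * (-β/α) = -β from by field_simp, neg_smul]
          exact eq_neg_of_add_eq_zero_left hab
        have h3 := smul_right_injective _ hα h2
        rw [vadd_eq_add, ← h3]; abel
      · exact ⟨1, by simp⟩
    · apply (collinear_iff_of_mem (Set.mem_insert u {v, x})).2
      refine ⟨v - u, fun p hp => ?_⟩
      simp only [Set.mem_insert_iff, Set.mem_singleton_iff] at hp
      rcases hp with rfl | rfl | rfl
      · exact ⟨0, by simp⟩
      · exact ⟨1, by simp⟩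
      · refine ⟨-α/β, ?_⟩
        have h2 : β • (p - u) = β • ((-α/β) • (v - u)) := by
          rw [smul_smul, show β * (-α/β) = -α from by field_simp, neg_smul]
          exact eq_neg_of_add_eq_zero_right hab
        have h3 := smul_right_injective _ hβ h2
        rw [vadd_eq_add, ← h3]; abel
  -- p' ≠ y
  have hpy : p' ≠ y := by
    intro hpy
    have h0 : a • (v - u) + (-b) • (x - u) = 0 := by
      have hz : p' - y = 0 := by rw [hpy, sub_self]
      have hc2 : a • (v - u) + (-b) • (x - u) = (p' - u) - (y - u) := by
        rw [hb, ha]; module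
      rw [hc2, show (p' - u) - (y - u) = p' - y from by abel, hz]
    exact ha1 (hV _ _ h0).1
  -- collinearity gives i - y = r • (p' - y)
  obtain ⟨w, hw⟩ := (collinear_iff_of_mem (show y ∈ ({y, i, p'} : Set _) by simp)).1 hcol
  obtain ⟨ri, hri⟩ := hw i (by simp)
  obtain ⟨rp, hrp⟩ := hw p' (by simp)
  rw [vadd_eq_add] at hri hrp
  have hrp0 : rp ≠ 0 := by rintro rfl; rw [zero_smul, zero_add] at hrp; exact hpy hrp
  set r := ri / rp with hr
  have hiy : i - y = r • (p' - y) := by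
    rw [show i - y = ri • w from by rw [hri]; abel,
        show p' - y = rp • w from by rw [hrp]; abel, smul_smul, div_mul_cancel₀ _ hrp0]
  -- the key linear relation
  have t1 : i - y = (s + 1 + a) • (v - u) + (-s) • (x - u) := by
    rw [show i - y = (i - v) + (v - u) - (y - u) from by abel, hs, ha]; module
  have t2 : p' - y = a • (v - u) + (-b) • (x - u) := by
    rw [show p' - y = (p' - u) - (y - u) from by abel, hb, ha]; module
  rw [t1, t2] at hiy
  have key : (s + 1 + a - r * a) • (v - u) + (r * b - s) • (x - u) = 0 := by
    have hcalc : (s + 1 + a - r * a) • (v - u) + (r * b - s) • (x - u)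
        = ((s + 1 + a) • (v - u) + (-s) • (x - u)) - r • (a • (v - u) + (-b) • (x - u)) := by
      module
    rw [hcalc, hiy, sub_self]
  obtain ⟨h1, h2⟩ := hV _ _ key
  -- distances
  have hN2 : 0 < dist x u := dist_pos.2 (Ne.symm hux)
  have hN1 : 0 < dist u v := dist_pos.2 huv
  have hN3 : 0 ≤ dist x v := dist_nonneg
  have d_yu : dist y u = a * dist u v := by
    rw [dist_eq_norm, ha, norm_smul, Real.norm_eq_abs, abs_of_pos hapos, ← dist_eq_norm]
  have d_vz : dist v z = c * dist u v := by
    rw [dist_eq_norm', hc, norm_smul, Real.norm_eq_abs, abs_of_pos hcpos, norm_sub_rev,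
      ← dist_eq_norm]
  have d_yz : dist y z = (1 + a + c) * dist u v := by
    have hyz : y - z = (1 + a + c) • (u - v) := by
      rw [show y - z = (y - u) - (z - v) - (v - u) from by abel, ha, hc]; module
    rw [dist_eq_norm, hyz, norm_smul, Real.norm_eq_abs, abs_of_pos (by linarith), ← dist_eq_norm]
  have d_up : dist u p' = b * dist x u := by
    have h : u - p' = b • (x - u) := by
      rw [show u - p' = -(p' - u) from by abel, hb]; module
    rw [dist_eq_norm, h, norm_smul, Real.norm_eq_abs, abs_of_pos hbpos, ← dist_eq_norm]
  have d_pq : dist p' q' = (1 + b + e) * dist x u := by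
    have h : q' - p' = (1 + b + e) • (x - u) := by
      rw [show q' - p' = (q' - x) + (x - u) - (p' - u) from by abel, he, hb]; module
    rw [dist_eq_norm', h, norm_smul, Real.norm_eq_abs, abs_of_pos (by linarith), ← dist_eq_norm]
  have d_vi : dist v i = s * dist x v := by
    rw [dist_eq_norm', hs, norm_smul, Real.norm_eq_abs, abs_of_pos hspos, norm_sub_rev,
      ← dist_eq_norm]
  -- scalar inequality from hd
  have hineq : (1 + a + c) * (1 + b + e) * 2 ≤ a * c := by
    rw [d_yz, d_vz, d_yu, d_pq] at hd
    have hsimp : (1 + a + c) * dist u v * dist u v / (a * dist u v * (c * dist u v))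
        = (1 + a + c) / (a * c) := by
      field_simp
    rw [hsimp] at hd
    rw [show (1 + a + c) / (a * c) * ((1 + b + e) * dist x u)
        = ((1 + a + c) / (a * c) * (1 + b + e)) * dist x u from by ring] at hd
    have h3 := le_of_mul_le_mul_right hd hN2
    rw [div_mul_eq_mul_div, div_le_iff₀ (by positivity)] at h3
    linarith
  have hsab : s * a = b * (s + 1 + a) := by linear_combination (-a) * h2 - b * h1
  have hage : 2 + 2 * b ≤ a := by
    nlinarith [mul_pos hapos hcpos, mul_nonneg hc0 he0, mul_nonneg ha0 hb0,
      mul_nonneg ha0 he0, mul_nonneg hb0 he0, mul_nonneg hc0 hb0]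
  have hs2b : s ≤ 2 * b := by
    nlinarith [mul_nonneg hb0 (by linarith : (0:ℝ) ≤ a - 2 * b - 1), hspos, hbpos,
      mul_pos hspos hbpos]
  rw [d_vi, d_up, show 2 * (dist x v / dist x u) * (b * dist x u) = 2 * b * dist x v from by
    field_simp]
  nlinarith [mul_le_mul_of_nonneg_right hs2b hN3]
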